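/- arXiv:2104.14048 — 2 statements merged into one kernel-verified Lean document; each statement's English description precedes it below -/
import Mathlib

section
/- Let L be a bounded lattice with bounds 0 and 1, and let u, v ∈ L. Then con(u,1) ⊔ con(v,1) = con(u ⊓ v, 1) in the congruence lattice of L. -/
set_option linter.unusedVariables false

/-- A lattice congruence: an equivalence relation compatible with `⊔` and `⊓`. -/
structure LatticeCon' (L : Type*) [Lattice L] : Type _ where
  r : L → L → Prop
  refl : ∀ x, r x x
  symm : ∀ {x y}, r x y → r y x
  trans : ∀ {x y z}, r x y → r y z → r x z
  sup : ∀ {a b c d}, r a b → r c d → r (a ⊔ c) (b ⊔ d)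
  inf : ∀ {a b c d}, r a b → r c d → r (a ⊓ c) (b ⊓ d)

namespace LatticeCon'

variable {L : Type*} [Lattice L]

theorem ext' {c d : LatticeCon' L} (h : c.r = d.r) : c = d := by
  cases c; cases d; cases h; rfl

instance : PartialOrder (LatticeCon' L) where
  le c d := ∀ x y, c.r x y → d.r x y
  le_refl _ _ _ h := h
  le_trans _ _ _ hab hbc x y h := hbc x y (hab x y h)
  le_antisymm a b hab hba :=
    ext' (by funext x y; exact propext ⟨hab x y, hba x y⟩)

instance : InfSet (LatticeCon' L) where
  sInf S :=
    { r := fun x y => ∀ c ∈ S, c.r x y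
      refl := fun x c _ => c.refl x
      symm := fun h c hc => c.symm (h c hc)
      trans := fun h1 h2 c hc => c.trans (h1 c hc) (h2 c hc)
      sup := fun h1 h2 c hc => c.sup (h1 c hc) (h2 c hc)
      inf := fun h1 h2 c hc => c.inf (h1 c hc) (h2 c hc) }

/-- The complete lattice `Con L` of congruences of `L`. -/
instance : CompleteLattice (LatticeCon' L) :=
  completeLatticeOfInf _ fun S =>
    ⟨fun c hc x y h => h c hc, fun b hb x y h c hc => hb hc x y h⟩

end LatticeCon'

/-- `latticeCon a b` is the principal congruence `con(a,b)`, the smallest congruence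
collapsing `a` and `b`. -/
def latticeCon {L : Type*} [Lattice L] (a b : L) : LatticeCon' L :=
  sInf {c : LatticeCon' L | c.r a b}


lemma latticeCon_rel {L : Type*} [Lattice L] (a b : L) : (latticeCon a b).r a b :=
  fun _ hc => hc

lemma latticeCon_le {L : Type*} [Lattice L] {a b : L} {c : LatticeCon' L}
    (h : c.r a b) : latticeCon a b ≤ c :=
  fun _ _ hxy => hxy c h

/-- in a bounded lattice, `con(u,1) ⊔ con(v,1) = con(u ⊓ v, 1)`. -/
theorem con_top_sup_con_top
    {L : Type*} [Lattice L] [BoundedOrder L] (u v : L) :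
    latticeCon u (⊤ : L) ⊔ latticeCon v (⊤ : L) = latticeCon (u ⊓ v) (⊤ : L) := by
  apply le_antisymm
  · apply sup_le
    · apply latticeCon_le
      have h := latticeCon_rel (u ⊓ v) (⊤ : L)
      have := (latticeCon (u ⊓ v) (⊤ : L)).sup h ((latticeCon (u ⊓ v) (⊤ : L)).refl u)
      simpa [inf_sup_self] using this
    · apply latticeCon_le
      have h := latticeCon_rel (u ⊓ v) (⊤ : L)
      have := (latticeCon (u ⊓ v) (⊤ : L)).sup h ((latticeCon (u ⊓ v) (⊤ : L)).refl v)
      simpa [inf_comm, inf_sup_self] using this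
  · apply latticeCon_le
    set d := latticeCon u (⊤ : L) ⊔ latticeCon v (⊤ : L) with hd
    have h1 : d.r u ⊤ := (le_sup_left : latticeCon u (⊤:L) ≤ d) u ⊤ (latticeCon_rel u ⊤)
    have h2 : d.r v ⊤ := (le_sup_right : latticeCon v (⊤:L) ≤ d) v ⊤ (latticeCon_rel v ⊤)
    simpa using d.inf h1 h2
end

section
/- Let D be a finite distributive lattice and P = J(D). For every element d ∈ D there is an interval of some finite chain C colored onto P whose color set joins to d; concretely: there exists a finite chain C, a surjective coloring col of its prime intervals by P, and x ≤ y in C with ⋁ colset[x,y] = d. Hence D itself is chain representable (Rep C = D for a suitable colored chain C). -/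
set_option linter.unusedVariables false

/-- The color set of the interval `[x, y]`: the set of colors of the prime intervals
(covering pairs) of the chain `C` contained in `[x, y]`. -/
def colorSet {C P : Type*} [PartialOrder C] (col : ∀ u v : C, u ⋖ v → P) (x y : C) : Set P :=
  {p | ∃ u v, ∃ h : u ⋖ v, x ≤ u ∧ v ≤ y ∧ col u v h = p}

variable {D : Type*} [DistribLattice D] [Fintype D] [BoundedOrder D]

/-- A finite distributive lattice is a complete lattice, so `sSup` makes sense. -/
noncomputable local instance : CompleteLattice D := Fintype.toCompleteLattice D


/-- coloring of the chain of length `L.length` by entries of `L`. -/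
def colOf (L : List D) : ∀ u v : Fin (L.length + 1), u ⋖ v → D :=
  fun u v h => L.get ⟨u, by
    have : (u : ℕ) ⋖ (v : ℕ) := Fin.coe_covBy_iff.2 h
    have hv : (u : ℕ) + 1 = v := Order.covBy_iff_add_one_eq.1 this
    omega⟩

lemma mem_colorSet_colOf (L : List D) (a b : Fin (L.length + 1)) (p : D) :
    p ∈ colorSet (colOf L) a b ↔
      ∃ (i : ℕ) (hi : i < L.length), (a : ℕ) ≤ i ∧ i + 1 ≤ (b : ℕ) ∧ L.get ⟨i, hi⟩ = p := by
  constructor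
  · rintro ⟨u, v, h, hau, hvb, rfl⟩
    have hco : (u : ℕ) + 1 = v := Order.covBy_iff_add_one_eq.1 (Fin.coe_covBy_iff.2 h)
    have hi : (u : ℕ) < L.length := by omega
    exact ⟨u, hi, hau, by omega, rfl⟩
  · rintro ⟨i, hi, hai, hib, rfl⟩
    refine ⟨⟨i, by omega⟩, ⟨i + 1, by omega⟩, ?_, hai, ?_, rfl⟩
    · exact Fin.coe_covBy_iff.1 (Order.covBy_iff_add_one_eq.2 rfl)
    · exact hib

set_option linter.unusedSectionVars false

lemma colorSet_middle (L₁ L₂ L₃ : List D) (x y : Fin ((L₁ ++ L₂ ++ L₃).length + 1))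
    (hx : (x : ℕ) = L₁.length) (hy : (y : ℕ) = L₁.length + L₂.length) :
    colorSet (colOf (L₁ ++ L₂ ++ L₃)) x y = {p | p ∈ L₂} := by
  ext p
  rw [mem_colorSet_colOf]
  simp only [Set.mem_setOf_eq, List.length_append] at *
  have key : ∀ (i : ℕ) (hi : i < L₁.length + L₂.length + L₃.length) (h1 : L₁.length ≤ i)
      (h2 : i - L₁.length < L₂.length),
      (L₁ ++ L₂ ++ L₃).get ⟨i, by simp; omega⟩ = L₂[i - L₁.length]'h2 := by
    intro i hi h1 h2
    rw [List.get_eq_getElem]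
    simp only [Fin.val_mk]
    rw [List.getElem_append_left (show i < (L₁ ++ L₂).length by simp; omega),
      List.getElem_append_right h1]
  constructor
  · rintro ⟨i, hi, hai, hib, rfl⟩
    have hi' : i < L₁.length + L₂.length + L₃.length := by simpa using hi
    have h1 : L₁.length ≤ i := by omega
    have h2 : i - L₁.length < L₂.length := by omega
    have := key i hi' h1 h2
    simp only [List.get_eq_getElem] at this ⊢
    rw [this]
    exact List.getElem_mem _
  · intro hp
    obtain ⟨j, hj, rfl⟩ := List.getElem_of_mem hp
    refine ⟨L₁.length + j, by omega, by omega, by omega, ?_⟩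
    have := key (L₁.length + j) (by omega) (by omega) (by simpa using hj)
    rw [this]
    congr 1
    omega

open scoped Classical in
/-- The sup-irreducible elements below `d`. -/
noncomputable def irrBelow (d : D) : Finset D :=
  Finset.univ.filter (fun p => SupIrred p ∧ p ≤ d)

lemma mem_irrBelow {d p : D} : p ∈ irrBelow d ↔ SupIrred p ∧ p ≤ d := by
  classical simp [irrBelow]

lemma sSup_irrBelow (d : D) : sSup {p : D | p ∈ (irrBelow d).toList} = d := by
  have hset : {p : D | p ∈ (irrBelow d).toList} = ↑(irrBelow d) := by
    ext p; simp [Finset.mem_toList]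
  rw [hset]
  apply le_antisymm
  · exact sSup_le fun p hp => (mem_irrBelow.1 hp).2
  · obtain ⟨s, hs, hirr⟩ := exists_supIrred_decomposition d
    calc d = s.sup id := hs.symm
    _ ≤ sSup ↑(irrBelow d) := Finset.sup_le fun b hb =>
        le_sSup (mem_irrBelow.2 ⟨hirr hb, hs ▸ Finset.le_sup (f := id) hb⟩)

lemma exists_interval (L L₁ L₂ L₃ : List D) (hL : L = L₁ ++ L₂ ++ L₃) (d : D)
    (h : sSup {p : D | p ∈ L₂} = d) :
    ∃ x y : Fin (L.length + 1), x ≤ y ∧ sSup (colorSet (colOf L) x y) = d := by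
  subst hL
  refine ⟨⟨L₁.length, by simp only [List.length_append]; omega⟩, ⟨L₁.length + L₂.length, by simp only [List.length_append]; omega⟩, ?_, ?_⟩
  · simp [Fin.le_def]
  · rw [colorSet_middle L₁ L₂ L₃ _ _ rfl rfl, h]

lemma colOf_mem (L : List D) (u v : Fin (L.length + 1)) (h : u ⋖ v) : colOf L u v h ∈ L :=
  List.get_mem _ _

lemma exists_colOf_eq {L : List D} {p : D} (hp : p ∈ L) :
    ∃ u v h, colOf L u v h = p := by
  obtain ⟨i, hi, rfl⟩ := List.getElem_of_mem hp
  refine ⟨⟨i, by omega⟩, ⟨i + 1, by omega⟩,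
    Fin.coe_covBy_iff.1 (Order.covBy_iff_add_one_eq.2 rfl), rfl⟩

lemma main_construction :
    ∃ (n : ℕ) (col : ∀ u v : Fin (n + 1), u ⋖ v → D),
      (∀ u v (h : u ⋖ v), SupIrred (col u v h)) ∧
      (∀ p : D, SupIrred p → ∃ u v h, col u v h = p) ∧
      {d : D | ∃ x y : Fin (n + 1), x ≤ y ∧ sSup (colorSet col x y) = d} = Set.univ := by
  classical
  set f : D → List D := fun e => (irrBelow e).toList with hf
  set L : List D := (Finset.univ : Finset D).toList.flatMap f with hLdef
  have hmem : ∀ p : D, p ∈ L ↔ ∃ e, SupIrred p ∧ p ≤ e := by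
    intro p
    rw [hLdef, List.mem_flatMap]
    constructor
    · rintro ⟨e, _, hpe⟩
      rw [hf] at hpe
      simp only [Finset.mem_toList] at hpe
      exact ⟨e, mem_irrBelow.1 hpe⟩
    · rintro ⟨e, h1, h2⟩
      exact ⟨e, Finset.mem_toList.2 (Finset.mem_univ e), by
        rw [hf]; simp only [Finset.mem_toList]; exact mem_irrBelow.2 ⟨h1, h2⟩⟩
  refine ⟨L.length, colOf L, ?_, ?_, ?_⟩
  · intro u v h
    obtain ⟨e, h1, _⟩ := (hmem _).1 (colOf_mem L u v h)
    exact h1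
  · intro p hp
    exact exists_colOf_eq ((hmem p).2 ⟨p, hp, le_rfl⟩)
  · ext d
    simp only [Set.mem_setOf_eq, Set.mem_univ, iff_true]
    obtain ⟨t₁, t₂, ht⟩ := List.append_of_mem (Finset.mem_toList.2 (Finset.mem_univ d))
    refine exists_interval L (t₁.flatMap f) (f d) (t₂.flatMap f) ?_ d (sSup_irrBelow d)
    rw [hLdef, ht]
    simp [List.flatMap_append, List.flatMap_cons, List.append_assoc]

/-- every element of a finite distributive lattice `D` is the join of the
color set of an interval of some finite chain colored onto `J(D)`; hence `D` itself is
chain representable. -/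
theorem D_is_chain_representable :
    (∀ d : D, ∃ (n : ℕ) (col : ∀ u v : Fin (n + 1), u ⋖ v → D),
      (∀ u v (h : u ⋖ v), SupIrred (col u v h)) ∧
      (∀ p : D, SupIrred p → ∃ u v h, col u v h = p) ∧
      ∃ x y : Fin (n + 1), x ≤ y ∧ sSup (colorSet col x y) = d) ∧
    ∃ (n : ℕ) (col : ∀ u v : Fin (n + 1), u ⋖ v → D),
      (∀ u v (h : u ⋖ v), SupIrred (col u v h)) ∧
      (∀ p : D, SupIrred p → ∃ u v h, col u v h = p) ∧
      {d : D | ∃ x y : Fin (n + 1), x ≤ y ∧ sSup (colorSet col x y) = d} = Set.univ := by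
  obtain ⟨n, col, h1, h2, h3⟩ := main_construction (D := D)
  refine ⟨fun d => ⟨n, col, h1, h2, ?_⟩, n, col, h1, h2, h3⟩
  have : d ∈ {d : D | ∃ x y : Fin (n + 1), x ≤ y ∧ sSup (colorSet col x y) = d} := by
    rw [h3]; trivial
  exact this
end
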